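/- Let sin X := Σ_{m≥0} (−1)^m X^{2m+1}/(2m+1)! ∈ ℝ[[X]] and V := (X² − (sin X)²)/2, a formal power series of order 4. Then for every n ∈ ℕ, Σ_{k=0}^{2n} ((2(n+k)−1)!!/k!) · [X^{2(n+k)}](V^k) = ((2n−1)!!)²/(2ⁿ n!). Equivalently, the partition function of the zero-dimensional sine-Gordon model, F[−sin²(X)/2](ħ), equals Σ_{n≥0} ħⁿ (2n−1)!! [X^{2n}](1−X²)^{−1/2}, which is the partition function Z₀ of zero-dimensional quantum electrodynamics. -/

import Mathlib

/-- `dfac m` is the odd double factorial `(2m-1)!! = (2m)!/(2^m m!)` as a real number. -/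
noncomputable def dfac (m : ℕ) : ℝ := ((2 * m).factorial : ℝ) / (2 ^ m * (m.factorial : ℝ))

/-- The formal power series `sin X = Σ_{m≥0} (-1)^m X^{2m+1}/(2m+1)!`. -/
noncomputable def sinPS : PowerSeries ℝ :=
  PowerSeries.mk fun j => if j % 2 = 1 then (-1 : ℝ) ^ (j / 2) / (j.factorial : ℝ) else 0

open PowerSeries Finset

noncomputable def cosPS : PowerSeries ℝ :=
  PowerSeries.mk fun j => if j % 2 = 0 then (-1 : ℝ) ^ (j / 2) / (j.factorial : ℝ) else 0

noncomputable def Vs : PowerSeries ℝ :=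
  PowerSeries.C (R := ℝ) (1 / 2) * (PowerSeries.X ^ 2 - sinPS ^ 2)

noncomputable def gam (j : ℕ) : ℝ := dfac j / (2 ^ j * (j.factorial : ℝ))

lemma dfac_zero : dfac 0 = 1 := by simp [dfac]

lemma dfac_succ (m : ℕ) : dfac (m + 1) = (2 * m + 1) * dfac m := by
  have h1 : (2 * (m + 1)) = (2 * m + 1) + 1 := by ring
  rw [dfac, dfac, h1, Nat.factorial_succ, Nat.factorial_succ, Nat.factorial_succ]
  have h2 : ((2*m).factorial : ℝ) ≠ 0 := by positivity
  have h3 : (m.factorial : ℝ) ≠ 0 := by positivity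
  push_cast
  field_simp
  ring

lemma dfac_one : dfac 1 = 1 := by
  rw [show (1:ℕ) = 0 + 1 from rfl, dfac_succ, dfac_zero]; norm_num

lemma gam_zero : gam 0 = 1 := by simp [gam, dfac_zero]

lemma gam_succ (j : ℕ) : (2 * j + 2) * gam (j + 1) = (2 * j + 1) * gam j := by
  rw [gam, gam, dfac_succ, Nat.factorial_succ]
  have h3 : (j.factorial : ℝ) ≠ 0 := by positivity
  have h4 : (2:ℝ)^j ≠ 0 := by positivity
  push_cast
  field_simp
  ring

lemma coeff_sin (j : ℕ) :
    PowerSeries.coeff (R := ℝ) j sinPS = if j % 2 = 1 then (-1 : ℝ) ^ (j / 2) / (j.factorial : ℝ) else 0 := by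
  simp [sinPS]

lemma coeff_cos (j : ℕ) :
    PowerSeries.coeff (R := ℝ) j cosPS = if j % 2 = 0 then (-1 : ℝ) ^ (j / 2) / (j.factorial : ℝ) else 0 := by
  simp [cosPS]

lemma constantCoeff_sin : PowerSeries.constantCoeff (R := ℝ) sinPS = 0 := by
  rw [← PowerSeries.coeff_zero_eq_constantCoeff]; simp [coeff_sin]

lemma constantCoeff_cos : PowerSeries.constantCoeff (R := ℝ) cosPS = 1 := by
  rw [← PowerSeries.coeff_zero_eq_constantCoeff]; simp [coeff_cos]

lemma derivative_sin : d⁄dX ℝ sinPS = cosPS := by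
  ext n
  rw [PowerSeries.coeff_derivative, coeff_sin, coeff_cos]
  rcases Nat.even_or_odd n with ⟨t, rfl⟩ | ⟨t, rfl⟩
  · have h1 : (t + t + 1) % 2 = 1 := by omega
    have h2 : (t + t) % 2 = 0 := by omega
    have h3 : (t + t + 1) / 2 = t := by omega
    have h4 : (t + t) / 2 = t := by omega
    rw [if_pos h1, if_pos h2, h3, h4, Nat.factorial_succ]
    have : ((t+t).factorial : ℝ) ≠ 0 := by positivity
    push_cast
    field_simp
  · have h1 : (2 * t + 1 + 1) % 2 = 0 := by omega
    have h2 : (2 * t + 1) % 2 = 1 := by omega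
    rw [if_neg (by omega), if_neg (by omega)]
    simp

lemma derivative_cos : d⁄dX ℝ cosPS = -sinPS := by
  ext n
  rw [PowerSeries.coeff_derivative, map_neg, coeff_sin, coeff_cos]
  rcases Nat.even_or_odd n with ⟨t, rfl⟩ | ⟨t, rfl⟩
  · rw [if_neg (by omega), if_neg (by omega)]
    simp
  · have h1 : (2 * t + 1 + 1) % 2 = 0 := by omega
    have h3 : (2 * t + 1 + 1) / 2 = t + 1 := by omega
    have h4 : (2 * t + 1) / 2 = t := by omega
    rw [if_pos h1, if_pos (by omega : (2*t+1) % 2 = 1), h3, h4, Nat.factorial_succ]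
    have : ((2*t+1).factorial : ℝ) ≠ 0 := by positivity
    push_cast
    field_simp
    ring

lemma pyth : sinPS ^ 2 + cosPS ^ 2 = 1 := by
  apply PowerSeries.derivative.ext
  · have := Derivation.leibniz_pow (d⁄dX ℝ) (a := sinPS) 2
    simp only [map_add, Derivation.leibniz_pow, derivative_sin, derivative_cos, map_one,
      Derivation.map_one_eq_zero, smul_eq_mul]
    ring_nf
  · simp [map_add, map_pow, constantCoeff_sin, constantCoeff_cos]

lemma X_dvd_sin : (PowerSeries.X : PowerSeries ℝ) ∣ sinPS := by
  rw [PowerSeries.X_dvd_iff]; exact constantCoeff_sin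

lemma X4_dvd_Vs : (PowerSeries.X : PowerSeries ℝ) ^ 4 ∣ Vs := by
  rw [PowerSeries.X_pow_dvd_iff]
  intro m hm
  have hs : ∀ i : ℕ, PowerSeries.coeff (R := ℝ) i (sinPS ^ 2) =
      ∑ p ∈ range (i + 1), (PowerSeries.coeff (R := ℝ) p sinPS) * (PowerSeries.coeff (R := ℝ) (i - p) sinPS) := by
    intro i
    rw [pow_two, PowerSeries.coeff_mul, Finset.Nat.sum_antidiagonal_eq_sum_range_succ_mk]
  interval_cases m <;>
    simp [Vs, PowerSeries.coeff_C_mul, map_sub, hs, Finset.sum_range_succ, coeff_sin,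
      PowerSeries.coeff_X_pow] 

lemma coeff_of_X_pow_dvd {r m : ℕ} {g : PowerSeries ℝ} (h : (PowerSeries.X : PowerSeries ℝ) ^ r ∣ g)
    (hm : m < r) : PowerSeries.coeff (R := ℝ) m g = 0 :=
  PowerSeries.X_pow_dvd_iff.mp h m hm

lemma X_pow_dvd_Vs_pow (k : ℕ) : (PowerSeries.X : PowerSeries ℝ) ^ (4 * k) ∣ Vs ^ k := by
  have h := pow_dvd_pow_of_dvd X4_dvd_Vs k
  rwa [← pow_mul] at h

lemma coeff_Vs_pow_zero {k m : ℕ} (hm : m < 4 * k) : PowerSeries.coeff (R := ℝ) m (Vs ^ k) = 0 :=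
  coeff_of_X_pow_dvd (X_pow_dvd_Vs_pow k) hm

lemma coeff_mul_Vs_pow_zero {r : ℕ} (g : PowerSeries ℝ)
    (hr : (PowerSeries.X : PowerSeries ℝ) ^ r ∣ g) {k m : ℕ} (hm : m < r + 4 * k) :
    PowerSeries.coeff (R := ℝ) m (g * Vs ^ k) = 0 :=
  coeff_of_X_pow_dvd (by rw [pow_add]; exact mul_dvd_mul hr (X_pow_dvd_Vs_pow k)) hm

lemma X3_dvd_dVs : (PowerSeries.X : PowerSeries ℝ) ^ 3 ∣ d⁄dX ℝ Vs := by
  rw [PowerSeries.X_pow_dvd_iff]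
  intro m hm
  rw [PowerSeries.coeff_derivative, coeff_of_X_pow_dvd X4_dvd_Vs (by omega), zero_mul]

noncomputable def LL (n : ℕ) (f : PowerSeries ℝ) : ℝ :=
  ∑ k ∈ range (n + 1),
    dfac (n + k) / (k.factorial : ℝ) * PowerSeries.coeff (R := ℝ) (2 * (n + k)) (f * Vs ^ k)

noncomputable def AA (m : ℕ) : ℝ := LL m cosPS

lemma LL_extend {n M : ℕ} (h : n ≤ M) (f : PowerSeries ℝ) :
    ∑ k ∈ range (M + 1),
      dfac (n + k) / (k.factorial : ℝ) * PowerSeries.coeff (R := ℝ) (2 * (n + k)) (f * Vs ^ k) = LL n f := by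
  rw [LL]
  apply (Finset.sum_subset (Finset.range_subset_range.mpr (by omega)) ?_).symm
  intro k _ hk
  have hk' : n + 1 ≤ k := by simpa using hk
  rw [coeff_mul_Vs_pow_zero (r := 0) f (by simpa using one_dvd f) (by omega), mul_zero]

lemma LL_add (n : ℕ) (f g : PowerSeries ℝ) : LL n (f + g) = LL n f + LL n g := by
  simp [LL, add_mul, map_add, mul_add, Finset.sum_add_distrib]

lemma LL_zero (n : ℕ) : LL n 0 = 0 := by simp [LL]

lemma LL_Cmul (n : ℕ) (a : ℝ) (f : PowerSeries ℝ) :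
    LL n (PowerSeries.C (R := ℝ) a * f) = a * LL n f := by
  rw [LL, LL, Finset.mul_sum]
  apply Finset.sum_congr rfl
  intro k _
  rw [mul_assoc, PowerSeries.coeff_C_mul]
  ring

lemma LL_neg (n : ℕ) (f : PowerSeries ℝ) : LL n (-f) = -LL n f := by
  have := LL_Cmul n (-1) f
  simpa using this

lemma LL_sub (n : ℕ) (f g : PowerSeries ℝ) : LL n (f - g) = LL n f - LL n g := by
  rw [sub_eq_add_neg, LL_add, LL_neg, sub_eq_add_neg]

lemma LL_nsmul (n : ℕ) (k : ℕ) (f : PowerSeries ℝ) : LL n (k • f) = k * LL n f := by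
  have : (k • f) = PowerSeries.C (R := ℝ) (k : ℝ) * f := by
    rw [nsmul_eq_mul, map_natCast (PowerSeries.C (R := ℝ)) k]
  rw [this, LL_Cmul]

lemma LL_sum (n : ℕ) {ι : Type*} (t : Finset ι) (F : ι → PowerSeries ℝ) :
    LL n (∑ i ∈ t, F i) = ∑ i ∈ t, LL n (F i) := by
  classical
  induction t using Finset.induction_on with
  | empty => simp [LL_zero]
  | insert a s h ih => rw [Finset.sum_insert h, Finset.sum_insert h, LL_add, ih]

lemma LL_zero_of_low {n : ℕ} {f : PowerSeries ℝ}
    (h : ∀ i, i ≤ 2 * n → PowerSeries.coeff (R := ℝ) i f = 0) : LL n f = 0 := by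
  rw [LL]
  apply Finset.sum_eq_zero
  intro k _
  rw [PowerSeries.coeff_mul, Finset.sum_eq_zero, mul_zero]
  intro p hp
  rw [Finset.HasAntidiagonal.mem_antidiagonal] at hp
  by_cases hi : p.1 ≤ 2 * n
  · rw [h p.1 hi, zero_mul]
  · rw [coeff_Vs_pow_zero (by omega), mul_zero]

lemma LL_congr {n : ℕ} {f g : PowerSeries ℝ}
    (h : ∀ i, i ≤ 2 * n → PowerSeries.coeff (R := ℝ) i f = PowerSeries.coeff (R := ℝ) i g) : LL n f = LL n g := by
  have := LL_zero_of_low (n := n) (f := f - g) (fun i hi => by rw [map_sub, h i hi, sub_self])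
  have h2 := LL_sub n f g
  rw [this] at h2
  linarith

lemma dVs_eq : d⁄dX ℝ Vs = PowerSeries.X - sinPS * cosPS := by
  rw [Vs]
  rw [Derivation.leibniz]
  simp only [PowerSeries.derivative_C, smul_zero, add_zero, map_sub, smul_eq_mul]
  rw [Derivation.leibniz_pow, Derivation.leibniz_pow, derivative_sin]
  simp only [PowerSeries.derivative_X, smul_eq_mul]
  have h2 : (PowerSeries.C (R := ℝ)) (1/2) * ((2 : ℕ) • (PowerSeries.X ^ (2-1) * 1) -
      (2 : ℕ) • (sinPS ^ (2-1) * cosPS)) =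
      PowerSeries.C (R := ℝ) (1/2) * PowerSeries.C (R := ℝ) 2 * (PowerSeries.X - sinPS * cosPS) := by
    simp only [pow_one, nsmul_eq_mul, Nat.cast_ofNat, mul_one]
    rw [show ((2 : ℝ⟦X⟧)) = PowerSeries.C (R := ℝ) 2 from (map_ofNat (PowerSeries.C (R := ℝ)) 2).symm]
    ring
  rw [h2, ← map_mul]
  norm_num

lemma ddVs_eq : d⁄dX ℝ (d⁄dX ℝ Vs) = PowerSeries.C (R := ℝ) 2 * sinPS ^ 2 := by
  rw [dVs_eq, map_sub, PowerSeries.derivative_X, Derivation.leibniz, derivative_sin,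
    derivative_cos]
  simp only [smul_eq_mul]
  rw [show (PowerSeries.C (R := ℝ) 2) = (2 : ℝ⟦X⟧) from map_ofNat (PowerSeries.C (R := ℝ)) 2]
  linear_combination -pyth

lemma LL_Xmul (n : ℕ) (f : PowerSeries ℝ) :
    LL (n+1) (PowerSeries.X * f) =
      ∑ k ∈ range (n+1), dfac (n+k) / (k.factorial : ℝ) *
        ((2*(n+k)+1 : ℝ) * PowerSeries.coeff (R := ℝ) (2*(n+k)+1) (f * Vs^k)) := by
  rw [LL, Finset.sum_range_succ]
  have hlast : PowerSeries.coeff (R := ℝ) (2*(n+1+(n+1))) ((PowerSeries.X*f) * Vs^(n+1)) = 0 :=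
    coeff_mul_Vs_pow_zero (r := 1) _ (by simpa using dvd_mul_right PowerSeries.X f) (by omega)
  rw [hlast, mul_zero, add_zero]
  apply Finset.sum_congr rfl
  intro k _
  have h2 : (PowerSeries.X*f)*Vs^k = PowerSeries.X*(f*Vs^k) := by ring
  rw [h2, show 2*(n+1+k) = (2*(n+k)+1)+1 by omega, PowerSeries.coeff_succ_X_mul,
    show n+1+k = (n+k)+1 by omega, dfac_succ]
  push_cast
  ring

lemma LL_shift (n M r : ℕ) (g : PowerSeries ℝ) (hg : (PowerSeries.X : PowerSeries ℝ)^r ∣ g)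
    (hM : M ≤ n + 1) (hMr : 2*n + 2 < r + 2*M) :
    ∑ k ∈ range (M+1), dfac (n+k) / (k.factorial : ℝ) *
        ((k : ℝ) * PowerSeries.coeff (R := ℝ) (2*(n+k)) (g * Vs^(k-1))) = LL (n+1) g := by
  rw [Finset.sum_range_succ']
  simp only [Nat.cast_zero, zero_mul, mul_zero, add_zero]
  rw [LL]
  rw [← Finset.sum_subset (Finset.range_subset_range.mpr (show M ≤ n + 2 by omega)) (fun j _ hj => by
    have hj' : M ≤ j := by simpa using hj
    rw [coeff_mul_Vs_pow_zero (r := r) g hg (by omega), mul_zero])]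
  apply Finset.sum_congr rfl
  intro i _
  have hfac : ((i+1).factorial : ℝ) = (i+1) * (i.factorial : ℝ) := by
    rw [Nat.factorial_succ]; push_cast; ring
  have hne : ((i : ℝ) + 1) ≠ 0 := by positivity
  have hne2 : (i.factorial : ℝ) ≠ 0 := by positivity
  rw [show n+(i+1) = n+1+i by omega, show i+1-1 = i by omega, hfac]
  push_cast
  field_simp

lemma IBP (n : ℕ) (f : PowerSeries ℝ) :
    LL n (d⁄dX ℝ f) = LL (n+1) (sinPS * cosPS * f) := by
  have hsplit : ∀ k : ℕ, PowerSeries.coeff (R := ℝ) (2*(n+k)) ((d⁄dX ℝ f) * Vs^k) =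
      PowerSeries.coeff (R := ℝ) (2*(n+k)) (d⁄dX ℝ (f * Vs^k)) -
        (k : ℝ) * PowerSeries.coeff (R := ℝ) (2*(n+k)) ((f * d⁄dX ℝ Vs) * Vs^(k-1)) := by
    intro k
    have hd : d⁄dX ℝ (f * Vs^k) = (d⁄dX ℝ f) * Vs^k + k • ((f * d⁄dX ℝ Vs) * Vs^(k-1)) := by
      rw [Derivation.leibniz, Derivation.leibniz_pow]
      simp only [smul_eq_mul, nsmul_eq_mul]
      ring
    rw [hd, map_add, map_nsmul, nsmul_eq_mul]
    ring
  have hT1 : ∀ k : ℕ, PowerSeries.coeff (R := ℝ) (2*(n+k)) (d⁄dX ℝ (f * Vs^k)) =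
      (2*(n+k)+1 : ℝ) * PowerSeries.coeff (R := ℝ) (2*(n+k)+1) (f * Vs^k) := by
    intro k
    rw [PowerSeries.coeff_derivative]
    push_cast
    ring
  calc LL n (d⁄dX ℝ f)
      = ∑ k ∈ range (n+1), dfac (n+k) / (k.factorial : ℝ) *
          ((2*(n+k)+1 : ℝ) * PowerSeries.coeff (R := ℝ) (2*(n+k)+1) (f * Vs^k)) -
        ∑ k ∈ range (n+1), dfac (n+k) / (k.factorial : ℝ) *
          ((k : ℝ) * PowerSeries.coeff (R := ℝ) (2*(n+k)) ((f * d⁄dX ℝ Vs) * Vs^(k-1))) := by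
        rw [LL, ← Finset.sum_sub_distrib]
        apply Finset.sum_congr rfl
        intro k _
        rw [hsplit k, hT1 k]
        ring
    _ = LL (n+1) (PowerSeries.X * f) - LL (n+1) (f * d⁄dX ℝ Vs) := by
        rw [LL_Xmul, LL_shift n n 3 _ (Dvd.dvd.mul_left X3_dvd_dVs f) (by omega) (by omega)]
    _ = LL (n+1) (sinPS * cosPS * f) := by
        rw [← LL_sub]
        congr 1
        rw [dVs_eq]
        ring

lemma LL_shift2 (n M r : ℕ) (g : PowerSeries ℝ) (hg : (PowerSeries.X : PowerSeries ℝ)^r ∣ g)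
    (hM : M ≤ n + 2) (hMr : 2*n + 4 < r + 2*M) :
    ∑ k ∈ range (M+2), dfac (n+k) / (k.factorial : ℝ) *
        (((k : ℝ) * ((k:ℝ) - 1)) * PowerSeries.coeff (R := ℝ) (2*(n+k)) (g * Vs^(k-2))) = LL (n+2) g := by
  rw [Finset.sum_range_succ', Finset.sum_range_succ']
  simp only [Nat.cast_zero, Nat.cast_one, zero_mul, mul_zero, add_zero, sub_self, mul_one,
    Nat.cast_add]
  norm_num
  rw [LL]
  rw [← Finset.sum_subset (Finset.range_subset_range.mpr (show M ≤ n + 3 by omega)) (fun j _ hj => by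
    have hj' : M ≤ j := by simpa using hj
    rw [coeff_mul_Vs_pow_zero (r := r) g hg (by omega), mul_zero])]
  apply Finset.sum_congr rfl
  intro i _
  have hfac : ((i+2).factorial : ℝ) = ((i:ℝ)+2) * ((i:ℝ)+1) * (i.factorial : ℝ) := by
    rw [Nat.factorial_succ, Nat.factorial_succ]; push_cast; ring
  have hne : ((i : ℝ) + 1) ≠ 0 := by positivity
  have hne1 : ((i : ℝ) + 2) ≠ 0 := by positivity
  have hne2 : (i.factorial : ℝ) ≠ 0 := by positivity
  rw [show n+(i+1+1) = n+2+i by omega, show i+1+1-2 = i by omega, hfac]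
  push_cast
  field_simp
  ring

lemma heat_coeff (m : ℕ) (g : PowerSeries ℝ) :
    ((m:ℝ)+1) * dfac (m+1) * PowerSeries.coeff (R := ℝ) (2*(m+1)) g =
      (1/2) * dfac m * PowerSeries.coeff (R := ℝ) (2*m) (d⁄dX ℝ (d⁄dX ℝ g)) := by
  rw [PowerSeries.coeff_derivative, PowerSeries.coeff_derivative,
    show 2*m+1+1 = 2*(m+1) by omega, dfac_succ]
  push_cast
  ring

lemma X2_dvd_ddVs : (PowerSeries.X : PowerSeries ℝ)^2 ∣ d⁄dX ℝ (d⁄dX ℝ Vs) := by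
  rw [ddVs_eq]
  exact Dvd.dvd.mul_left (by simpa [pow_two] using mul_dvd_mul X_dvd_sin X_dvd_sin) _

lemma ddpow (k : ℕ) : d⁄dX ℝ (d⁄dX ℝ (Vs^k)) =
    k • ((d⁄dX ℝ (d⁄dX ℝ Vs)) * Vs^(k-1)) +
      (k*(k-1)) • (((d⁄dX ℝ Vs) * (d⁄dX ℝ Vs)) * Vs^(k-2)) := by
  rcases k with _ | k
  · simp
  rcases k with _ | k
  · simp
  have h1 : d⁄dX ℝ (Vs^(k+2)) = (k+2) • (Vs^(k+1) * d⁄dX ℝ Vs) := by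
    rw [Derivation.leibniz_pow]
    simp [smul_eq_mul]
  rw [h1, map_nsmul, Derivation.leibniz, Derivation.leibniz_pow]
  simp only [smul_eq_mul, nsmul_eq_mul]
  push_cast [show k+2-1 = k+1 by omega, show k+1-1 = k by omega, show k+2-2 = k by omega]
  ring

lemma cast_kk (k : ℕ) : ((k*(k-1) : ℕ) : ℝ) = (k:ℝ)*((k:ℝ)-1) := by
  rcases k with _ | k
  · simp
  · push_cast [show k+1-1 = k from rfl]
    ring

lemma X6_dvd_dVs2 : (PowerSeries.X : PowerSeries ℝ)^6 ∣ (d⁄dX ℝ Vs) * (d⁄dX ℝ Vs) := by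
  have := mul_dvd_mul X3_dvd_dVs X3_dvd_dVs
  rwa [← pow_add] at this

lemma heat (nn : ℕ) :
    ((nn:ℝ)+1) * LL (nn+1) 1 =
      (1/2) * LL (nn+1) (d⁄dX ℝ (d⁄dX ℝ Vs)) +
        (1/2) * LL (nn+2) ((d⁄dX ℝ Vs) * (d⁄dX ℝ Vs)) - LL (nn+2) Vs := by
  have hstep1 : ((nn:ℝ)+1) * LL (nn+1) 1 =
      (∑ k ∈ range (nn+2), (1/2) * (dfac (nn+k) / (k.factorial : ℝ)) *
        PowerSeries.coeff (R := ℝ) (2*(nn+k)) (d⁄dX ℝ (d⁄dX ℝ (Vs^k)))) -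
      ∑ k ∈ range (nn+2), dfac (nn+1+k) / (k.factorial : ℝ) *
        ((k:ℝ) * PowerSeries.coeff (R := ℝ) (2*(nn+1+k)) (Vs * Vs^(k-1))) := by
    rw [LL, Finset.mul_sum, ← Finset.sum_sub_distrib]
    apply Finset.sum_congr rfl
    intro k _
    have hc := heat_coeff (nn+k) (Vs^k)
    have hVk : ((k:ℝ)) * PowerSeries.coeff (R := ℝ) (2*(nn+1+k)) (Vs * Vs^(k-1)) =
        ((k:ℝ)) * PowerSeries.coeff (R := ℝ) (2*(nn+1+k)) (Vs^k) := by
      rcases k with _ | k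
      · simp
      · rw [show k+1-1 = k by omega, ← pow_succ']
    rw [one_mul, hVk, show nn+1+k = nn+k+1 by omega]
    rw [show 2*(nn+k+1) = 2*((nn+k)+1) by omega]
    push_cast at hc ⊢
    linear_combination (1/(k.factorial:ℝ)) * hc
  have hsplitdd : ∀ k : ℕ, PowerSeries.coeff (R := ℝ) (2*(nn+k)) (d⁄dX ℝ (d⁄dX ℝ (Vs^k))) =
      (k:ℝ) * PowerSeries.coeff (R := ℝ) (2*(nn+k)) ((d⁄dX ℝ (d⁄dX ℝ Vs)) * Vs^(k-1)) +
        ((k:ℝ)*((k:ℝ)-1)) *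
          PowerSeries.coeff (R := ℝ) (2*(nn+k)) (((d⁄dX ℝ Vs) * (d⁄dX ℝ Vs)) * Vs^(k-2)) := by
    intro k
    rw [ddpow k, map_add, map_nsmul, map_nsmul, nsmul_eq_mul, nsmul_eq_mul, cast_kk]
  rw [hstep1]
  have hS1 : (∑ k ∈ range (nn+2), (1/2) * (dfac (nn+k) / (k.factorial : ℝ)) *
        PowerSeries.coeff (R := ℝ) (2*(nn+k)) (d⁄dX ℝ (d⁄dX ℝ (Vs^k)))) =
      (1/2) * (∑ k ∈ range (nn+2), dfac (nn+k) / (k.factorial : ℝ) *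
        ((k:ℝ) * PowerSeries.coeff (R := ℝ) (2*(nn+k)) ((d⁄dX ℝ (d⁄dX ℝ Vs)) * Vs^(k-1)))) +
      (1/2) * (∑ k ∈ range (nn+2), dfac (nn+k) / (k.factorial : ℝ) *
        (((k:ℝ)*((k:ℝ)-1)) *
          PowerSeries.coeff (R := ℝ) (2*(nn+k)) (((d⁄dX ℝ Vs) * (d⁄dX ℝ Vs)) * Vs^(k-2)))) := by
    rw [Finset.mul_sum, Finset.mul_sum, ← Finset.sum_add_distrib]
    apply Finset.sum_congr rfl
    intro k _
    rw [hsplitdd k]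
    ring
  rw [hS1]
  rw [LL_shift nn (nn+1) 2 _ X2_dvd_ddVs (by omega) (by omega)]
  rw [LL_shift2 nn nn 6 _ X6_dvd_dVs2 (by omega) (by omega)]
  rw [LL_shift (nn+1) (nn+1) 4 _ X4_dvd_Vs (by omega) (by omega)]

lemma X_pow_dvd_sinpow (j : ℕ) (g : PowerSeries ℝ) :
    (PowerSeries.X : PowerSeries ℝ)^j ∣ sinPS^j * g :=
  Dvd.dvd.mul_right (pow_dvd_pow_of_dvd X_dvd_sin j) g

lemma LL_sinpow_high {n j : ℕ} (h : 2*n < j) (g : PowerSeries ℝ) :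
    LL n (sinPS^j * g) = 0 := by
  apply LL_zero_of_low
  intro i hi
  exact coeff_of_X_pow_dvd (X_pow_dvd_sinpow j g) (by omega)

lemma AA_def (m : ℕ) : AA m = LL m cosPS := rfl

lemma LL_SC (j : ℕ) : ∀ n : ℕ, LL n (sinPS^(2*j) * cosPS) =
    if j ≤ n then dfac j * AA (n - j) else 0 := by
  induction j with
  | zero =>
    intro n
    rw [if_pos (by omega)]
    simp [dfac_zero, AA_def]
  | succ j ih =>
    intro n
    rcases n with _ | m
    · rw [if_neg (by omega)]
      exact LL_sinpow_high (by omega) _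
    · have hIBP := IBP m (sinPS^(2*j+1))
      have hder : d⁄dX ℝ (sinPS^(2*j+1)) = (2*j+1) • (sinPS^(2*j) * cosPS) := by
        rw [Derivation.leibniz_pow, derivative_sin]
        simp only [smul_eq_mul]
        rw [show 2*j+1-1 = 2*j by omega]
      have harg : sinPS * cosPS * sinPS^(2*j+1) = sinPS^(2*(j+1)) * cosPS := by
        rw [show 2*(j+1) = (2*j+1)+1 by omega]
        ring
      rw [hder, harg, LL_nsmul] at hIBP
      rw [← hIBP, ih m]
      rcases le_or_gt j m with hjm | hjm
      · rw [if_pos hjm, if_pos (by omega), show m+1-(j+1) = m - j by omega, dfac_succ]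
        push_cast
        ring
      · rw [if_neg (by omega), if_neg (by omega), mul_zero]

noncomputable def PP (N : ℕ) : PowerSeries ℝ :=
  ∑ j ∈ range (N+1), PowerSeries.C (R := ℝ) (gam j) * sinPS^(2*j)

noncomputable def bb (j : ℕ) : PowerSeries ℝ :=
  PowerSeries.C (R := ℝ) ((2*j : ℝ) * gam j) * sinPS^(2*j-1)


lemma gam_one : gam 1 = 1/2 := by
  have := gam_succ 0
  rw [gam_zero] at this
  push_cast at this
  linarith

lemma deriv_PPc (N : ℕ) : d⁄dX ℝ (PP N * cosPS) =
    PowerSeries.C (R := ℝ) (-(((2*(N+1) : ℕ) : ℝ)) * gam (N+1)) * sinPS^(2*(N+1)-1) := by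
  have hterm : ∀ j : ℕ, d⁄dX ℝ ((PowerSeries.C (R := ℝ) (gam j) * sinPS^(2*j)) * cosPS)
      = bb j - bb (j+1) := by
    intro j
    rw [Derivation.leibniz, Derivation.leibniz, Derivation.leibniz_pow, derivative_sin,
      derivative_cos, PowerSeries.derivative_C]
    simp only [smul_eq_mul, nsmul_eq_mul, mul_zero, add_zero, smul_zero, zero_add]
    rcases j with _ | i
    · rw [bb, bb]
      norm_num [gam_zero, gam_one]
    · have hC := congrArg (PowerSeries.C (R := ℝ)) (gam_succ (i+1))
      simp only [map_mul, map_add, map_natCast, map_ofNat, map_one] at hC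
      rw [bb, bb]
      rw [show 2*(i+1)-1 = 2*i+1 by omega, show 2*(i+1+1)-1 = 2*(i+1)+1 by omega]
      have hs1 : sinPS^(2*(i+1)) = sinPS^(2*i+1) * sinPS := by
        rw [← pow_succ, show 2*i+1+1 = 2*(i+1) by omega]
      have hs2 : sinPS^(2*(i+1)+1) = sinPS^(2*i+1) * sinPS^2 := by
        rw [← pow_add, show 2*i+1+2 = 2*(i+1)+1 by omega]
      simp only [map_mul, map_add, map_natCast, map_ofNat, map_one, hs1, hs2]
      push_cast at hC ⊢
      linear_combination ((PowerSeries.C (R := ℝ) (gam (i+1))) * (2*((i:ℝ⟦X⟧))+2) *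
        sinPS^(2*i+1)) * pyth + (sinPS^(2*i+1) * sinPS^2) * hC
  rw [PP, Finset.sum_mul, map_sum]
  rw [Finset.sum_congr rfl (fun j _ => hterm j), Finset.sum_range_sub']
  rw [bb, bb]
  have hb0 : PowerSeries.C (R := ℝ) ((2*(0:ℕ) : ℝ) * gam 0) * sinPS^(2*0-1) = 0 := by
    norm_num
  rw [hb0, zero_sub]
  rw [show (-(((2*(N+1) : ℕ) : ℝ)) * gam (N+1)) = -((2*((N+1):ℕ) : ℝ) * gam (N+1)) by
    push_cast; ring]
  rw [map_neg, neg_mul]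

lemma constCoeff_PPc (N : ℕ) :
    PowerSeries.coeff (R := ℝ) 0 (PP N * cosPS) = 1 := by
  rw [PowerSeries.coeff_zero_eq_constantCoeff, map_mul, constantCoeff_cos, mul_one, PP, map_sum]
  rw [Finset.sum_eq_single 0]
  · simp [gam_zero]
  · intro j _ hj
    rw [map_mul, map_pow, constantCoeff_sin, zero_pow (by omega), mul_zero]
  · intro h
    simp at h

lemma PPc_coeff (N : ℕ) : ∀ i, i ≤ 2*N+1 →
    PowerSeries.coeff (R := ℝ) i (PP N * cosPS) = PowerSeries.coeff (R := ℝ) i (1 : PowerSeries ℝ) := by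
  intro i hi
  rcases i with _ | i
  · rw [constCoeff_PPc]
    simp
  · have hD : PowerSeries.coeff (R := ℝ) i (d⁄dX ℝ (PP N * cosPS)) = 0 := by
      rw [deriv_PPc, PowerSeries.coeff_C_mul]
      rw [coeff_of_X_pow_dvd (g := sinPS^(2*(N+1)-1))
        (by simpa using X_pow_dvd_sinpow (2*(N+1)-1) 1) (by omega), mul_zero]
    rw [PowerSeries.coeff_derivative] at hD
    have : PowerSeries.coeff (R := ℝ) (i+1) (PP N * cosPS) = 0 := by
      have h2 : ((i:ℝ)+1) ≠ 0 := by positivity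
      rcases mul_eq_zero.mp hD with h | h
      · exact h
      · exfalso; apply h2; push_cast at h ⊢; linarith
    rw [this, PowerSeries.coeff_one, if_neg (by omega)]

lemma LL_expand (m N r : ℕ) (h : PowerSeries ℝ) (hr : (PowerSeries.X : PowerSeries ℝ)^r ∣ h)
    (hcond : 2*m ≤ 2*N+1+r) :
    LL m h = ∑ j ∈ range (N+1), gam j * LL m (h * (sinPS^(2*j) * cosPS)) := by
  have h1 : LL m h = LL m (h * (PP N * cosPS)) := by
    apply LL_congr
    intro i hi
    have h2 : h * (PP N * cosPS) - h = h * (PP N * cosPS - 1) := by ring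
    have h3 : PowerSeries.coeff (R := ℝ) i (h * (PP N * cosPS - 1)) = 0 := by
      rw [PowerSeries.coeff_mul]
      apply Finset.sum_eq_zero
      intro p hp
      rw [Finset.HasAntidiagonal.mem_antidiagonal] at hp
      by_cases hb : p.2 ≤ 2*N+1
      · rw [map_sub, PPc_coeff N p.2 hb, sub_self, mul_zero]
      · rw [coeff_of_X_pow_dvd hr (by omega), zero_mul]
    have h4 := congrArg (PowerSeries.coeff (R := ℝ) i) h2
    rw [map_sub, h3] at h4
    linarith
  rw [h1, PP, Finset.sum_mul]
  have h5 : h * (∑ j ∈ range (N+1), PowerSeries.C (R := ℝ) (gam j) * sinPS^(2*j) * cosPS) =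
      ∑ j ∈ range (N+1), PowerSeries.C (R := ℝ) (gam j) * (h * (sinPS^(2*j) * cosPS)) := by
    rw [Finset.mul_sum]
    apply Finset.sum_congr rfl
    intro j _
    ring
  rw [h5, LL_sum]
  apply Finset.sum_congr rfl
  intro j _
  rw [LL_Cmul]

lemma LL_one_expand (n : ℕ) :
    LL n 1 = ∑ j ∈ range (n+1), gam j * (dfac j * AA (n-j)) := by
  rw [LL_expand n n 0 1 (by simp) (by omega)]
  apply Finset.sum_congr rfl
  intro j hj
  rw [one_mul, LL_SC j n, if_pos (by simpa using Nat.lt_succ_iff.mp (Finset.mem_range.mp hj))]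

lemma LL_s2_expand (n : ℕ) : LL n (sinPS^2) =
    ∑ j ∈ range (n+1), gam j * (if j+1 ≤ n then dfac (j+1) * AA (n-(j+1)) else 0) := by
  rw [LL_expand n n 2 (sinPS^2) (pow_dvd_pow_of_dvd X_dvd_sin 2) (by omega)]
  apply Finset.sum_congr rfl
  intro j _
  have harg : sinPS^2 * (sinPS^(2*j) * cosPS) = sinPS^(2*(j+1)) * cosPS := by
    rw [show 2*(j+1) = 2*j+2 by omega, pow_add]
    ring
  rw [harg, LL_SC (j+1) n]

lemma LL_s2_expand' (n : ℕ) : LL (n+1) (sinPS^2) =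
    ∑ j ∈ range (n+1), gam j * (dfac (j+1) * AA (n-j)) := by
  rw [LL_expand (n+1) n 2 (sinPS^2) (pow_dvd_pow_of_dvd X_dvd_sin 2) (by omega)]
  apply Finset.sum_congr rfl
  intro j hj
  have harg : sinPS^2 * (sinPS^(2*j) * cosPS) = sinPS^(2*(j+1)) * cosPS := by
    rw [show 2*(j+1) = 2*j+2 by omega, pow_add]
    ring
  have hjn : j + 1 ≤ n + 1 := by
    have := Finset.mem_range.mp hj; omega
  rw [harg, LL_SC (j+1) (n+1), if_pos hjn, show n+1-(j+1) = n-j by omega]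

lemma LL_s4_expand (n : ℕ) : LL (n+1) (sinPS^4) =
    ∑ j ∈ range (n+1), gam j * (if j+2 ≤ n+1 then dfac (j+2) * AA (n+1-(j+2)) else 0) := by
  rw [LL_expand (n+1) n 4 (sinPS^4) (pow_dvd_pow_of_dvd X_dvd_sin 4) (by omega)]
  apply Finset.sum_congr rfl
  intro j _
  have harg : sinPS^4 * (sinPS^(2*j) * cosPS) = sinPS^(2*(j+2)) * cosPS := by
    rw [show 2*(j+2) = 2*j+4 by omega, pow_add]
    ring
  rw [harg, LL_SC (j+2) (n+1)]

lemma two_C_half : (2 : PowerSeries ℝ) * PowerSeries.C (R := ℝ) (1/2) = 1 := by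
  rw [show (2 : PowerSeries ℝ) = PowerSeries.C (R := ℝ) 2 from (map_ofNat _ 2).symm, ← map_mul]
  norm_num

lemma starLem (nn : ℕ) : ((nn:ℝ)+2) * LL (nn+1) 1 =
    LL (nn+1) (sinPS^2) + LL (nn+2) (sinPS^2) - (1/2) * LL (nn+2) (sinPS^4) := by
  have hheat := heat nn
  have hIBPX : LL (nn+1) 1 = LL (nn+2) (sinPS * cosPS * PowerSeries.X) := by
    have := IBP (nn+1) PowerSeries.X
    rwa [PowerSeries.derivative_X] at this
  have hdd : (1/2) * LL (nn+1) (d⁄dX ℝ (d⁄dX ℝ Vs)) = LL (nn+1) (sinPS^2) := by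
    rw [ddVs_eq, LL_Cmul]
    ring
  have hcomb : PowerSeries.C (R := ℝ) (1/2) * ((d⁄dX ℝ Vs) * (d⁄dX ℝ Vs)) - Vs +
      sinPS * cosPS * PowerSeries.X =
      sinPS^2 - PowerSeries.C (R := ℝ) (1/2) * (sinPS^2 * sinPS^2) := by
    rw [dVs_eq, Vs]
    linear_combination (PowerSeries.C (R := ℝ) (1/2) * sinPS^2) * pyth +
      (sinPS^2 - PowerSeries.X * sinPS * cosPS) * two_C_half
  have hcombLL : (1/2) * LL (nn+2) ((d⁄dX ℝ Vs) * (d⁄dX ℝ Vs)) - LL (nn+2) Vs +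
      LL (nn+2) (sinPS * cosPS * PowerSeries.X) =
      LL (nn+2) (sinPS^2) - (1/2) * LL (nn+2) (sinPS^4) := by
    have e1 := LL_Cmul (nn+2) (1/2) ((d⁄dX ℝ Vs) * (d⁄dX ℝ Vs))
    have e2 := LL_Cmul (nn+2) (1/2) (sinPS^2 * sinPS^2)
    have e3 := LL_sub (nn+2) (PowerSeries.C (R := ℝ) (1/2) * ((d⁄dX ℝ Vs) * (d⁄dX ℝ Vs))) Vs
    have e4 := LL_add (nn+2)
      (PowerSeries.C (R := ℝ) (1/2) * ((d⁄dX ℝ Vs) * (d⁄dX ℝ Vs)) - Vs)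
      (sinPS * cosPS * PowerSeries.X)
    rw [hcomb] at e4
    have hs4 : (sinPS^2 * sinPS^2) = sinPS^4 := by ring
    rw [hs4] at e2 e4
    have e5 := LL_sub (nn+2) (sinPS^2) (PowerSeries.C (R := ℝ) (1/2) * sinPS^4)
    rw [e5, e2, e3, e1] at e4
    linarith
  linarith [hheat, hIBPX, hdd, hcombLL]

lemma AA_zero : AA 0 = 1 := by
  rw [AA_def, LL]
  rw [Finset.sum_range_one]
  simp [dfac_zero, PowerSeries.coeff_zero_eq_constantCoeff, constantCoeff_cos]

theorem AA_eq (n : ℕ) : AA n = if n = 0 then 1 else 0 := by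
  induction n using Nat.strong_induction_on with
  | _ n ih =>
    rcases n with _ | m
    · rw [if_pos rfl, AA_zero]
    · rw [if_neg (by omega)]
      have hE1 : LL (m+1) 1 = AA (m+1) + gam (m+1) * dfac (m+1) := by
        rw [LL_one_expand (m+1), Finset.sum_range_succ']
        have hz : ∀ j ∈ range (m+1), j ≠ m →
            gam (j+1) * (dfac (j+1) * AA (m+1-(j+1))) = 0 := by
          intro j hj hjm
          have hlt : m+1-(j+1) < m+1 := by have := Finset.mem_range.mp hj; omega
          rw [ih _ hlt, if_neg (by have := Finset.mem_range.mp hj; omega), mul_zero, mul_zero]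
        rw [Finset.sum_eq_single m (fun j hj hjm => hz j hj hjm) (fun h => absurd (Finset.mem_range.mpr (by omega)) h)]
        rw [show m+1-(m+1) = 0 by omega, AA_zero, show m+1-0 = m+1 by omega]
        rw [gam_zero, dfac_zero]
        ring
      have hE3 : LL (m+2) (sinPS^2) = AA (m+1) + gam (m+1) * dfac (m+2) := by
        rw [LL_s2_expand' (m+1), Finset.sum_range_succ']
        have hz : ∀ j ∈ range (m+1), j ≠ m →
            gam (j+1) * (dfac (j+1+1) * AA (m+1-(j+1))) = 0 := by
          intro j hj hjm
          have hlt : m+1-(j+1) < m+1 := by have := Finset.mem_range.mp hj; omega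
          rw [ih _ hlt, if_neg (by have := Finset.mem_range.mp hj; omega), mul_zero, mul_zero]
        rw [Finset.sum_eq_single m (fun j hj hjm => hz j hj hjm) (fun h => absurd (Finset.mem_range.mpr (by omega)) h)]
        rw [show m+1-(m+1) = 0 by omega, AA_zero, show m+1-0 = m+1 by omega]
        rw [gam_zero, dfac_one]
        ring
      have hE2 : LL (m+1) (sinPS^2) = gam m * dfac (m+1) := by
        rw [LL_s2_expand (m+1)]
        rw [Finset.sum_eq_single m]
        · rw [if_pos (by omega), show m+1-(m+1) = 0 by omega, AA_zero, mul_one]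
        · intro j hj hjm
          by_cases hcond : j+1 ≤ m+1
          · rw [if_pos hcond]
            have hlt : m+1-(j+1) < m+1 := by omega
            rw [ih _ hlt, if_neg (by have := Finset.mem_range.mp hj; omega), mul_zero, mul_zero]
          · rw [if_neg hcond, mul_zero]
        · exact fun h => absurd (Finset.mem_range.mpr (by omega)) h
      have hE4 : LL (m+2) (sinPS^4) = gam m * dfac (m+2) := by
        rw [LL_s4_expand (m+1)]
        rw [Finset.sum_eq_single m]
        · rw [if_pos (by omega), show m+1+1-(m+2) = 0 by omega, AA_zero, mul_one]
        · intro j hj hjm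
          by_cases hcond : j+2 ≤ m+2
          · rw [if_pos hcond]
            have hlt : m+1+1-(j+2) < m+1 := by
              have := Finset.mem_range.mp hj; omega
            rw [ih _ hlt, if_neg (by have := Finset.mem_range.mp hj; omega), mul_zero, mul_zero]
          · rw [if_neg hcond, mul_zero]
        · exact fun h => absurd (Finset.mem_range.mpr (by omega)) h
      have hstar := starLem m
      rw [hE1, hE2, hE3, hE4] at hstar
      have hdf := dfac_succ (m+1)
      have hgam := gam_succ m
      push_cast at hdf hgam hstar
      have hkey : ((m:ℝ)+1) * AA (m+1) = 0 := by
        linear_combination hstar + (gam (m+1) - (1/2)*gam m) * hdf + (dfac (m+1)/2) * hgam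
      have hne : ((m:ℝ)+1) ≠ 0 := by positivity
      rcases mul_eq_zero.mp hkey with h | h
      · exact absurd h hne
      · exact h


/-- With `V = (X² - sin²X)/2` (a series of order 4), the `n`-th coefficient of the
partition function of the zero-dimensional sine-Gordon model `F[-sin²(X)/2]` equals
`((2n-1)!!)²/(2^n n!)`, the `n`-th coefficient of the partition function of
zero-dimensional QED. -/
theorem stmt9 (n : ℕ) :
    ∑ k ∈ Finset.range (2 * n + 1),
        dfac (n + k) / (k.factorial : ℝ) *
          PowerSeries.coeff (R := ℝ) (2 * (n + k))
            ((PowerSeries.C (R := ℝ) (1 / 2) * (PowerSeries.X ^ 2 - sinPS ^ 2)) ^ k)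
      = (dfac n) ^ 2 / (2 ^ n * (n.factorial : ℝ)) := by
  have h1 : ∑ k ∈ Finset.range (2 * n + 1),
      dfac (n + k) / (k.factorial : ℝ) *
        PowerSeries.coeff (R := ℝ) (2 * (n + k))
          ((PowerSeries.C (R := ℝ) (1 / 2) * (PowerSeries.X ^ 2 - sinPS ^ 2)) ^ k) = LL n 1 := by
    rw [← LL_extend (show n ≤ 2*n by omega) 1]
    apply Finset.sum_congr rfl
    intro k _
    rw [one_mul, Vs]
  rw [h1, LL_one_expand n]
  rw [Finset.sum_eq_single n]
  · rw [show n - n = 0 by omega, AA_eq 0, if_pos rfl, mul_one, gam]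
    ring
  · intro j hj hjn
    rw [AA_eq (n - j), if_neg (by have := Finset.mem_range.mp hj; omega), mul_zero, mul_zero]
  · exact fun h => absurd (Finset.mem_range.mpr (by omega)) h
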